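/- For any generalized Coxeter matrix M, the assignment Δ(T_i) = T_i ⊗ T_i for all i ∈ I extends to a well-defined coassociative algebra homomorphism Δ : NC(M) → NC(M) ⊗ NC(M), and Δ is cocommutative. -/

import Mathlib

/-- The alternating word `x y x y ⋯` of length `len` on two elements of a monoid. -/
def altProd {A : Type} [Monoid A] (x y : A) (len : ℕ) : A :=
  ((List.range len).map fun t => if t % 2 = 0 then x else y).prod

/-- Relations of the generalized nil-Coxeter algebra `NC(M)` of a generalized Coxeter
matrix `M : I → I → ℕ` (`M i j = 0` encodes `m_{ij} = ∞`): the braid relations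
`T_i T_j T_i ⋯ = T_j T_i T_j ⋯` (`M i j` factors on each side, for `i ≠ j` with
`M i j ≠ 0`) and the order relations `T_i^{M i i} = 0`. -/
inductive GCRel (k : Type) [CommRing k] {I : Type} (M : I → I → ℕ) :
    FreeAlgebra k I → FreeAlgebra k I → Prop
  | braid (i j : I) (h : i ≠ j) (hm : M i j ≠ 0) :
      GCRel k M (altProd (FreeAlgebra.ι k i) (FreeAlgebra.ι k j) (M i j))
        (altProd (FreeAlgebra.ι k j) (FreeAlgebra.ι k i) (M i j))
  | order (i : I) : GCRel k M (FreeAlgebra.ι k i ^ M i i) 0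

/-- The generalized nil-Coxeter algebra `NC(M)`. -/
abbrev NCM (k : Type) [CommRing k] {I : Type} (M : I → I → ℕ) := RingQuot (GCRel k M)

/-- The generator `T_i` of `NC(M)`. -/
noncomputable def TgM (k : Type) [CommRing k] {I : Type} (M : I → I → ℕ) (i : I) :
    NCM k M :=
  RingQuot.mkAlgHom k (GCRel k M) (FreeAlgebra.ι k i)

lemma altProd_succ {A : Type} [Monoid A] (x y : A) (n : ℕ) :
    altProd x y (n+1) = altProd x y n * (if n % 2 = 0 then x else y) := by
  simp [altProd, List.range_succ]

lemma altProd_map {F A B : Type} [Monoid A] [Monoid B] [FunLike F A B]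
    [MonoidHomClass F A B] (f : F) (x y : A) (n : ℕ) :
    f (altProd x y n) = altProd (f x) (f y) n := by
  induction n with
  | zero => simp [altProd]
  | succ n ih => rw [altProd_succ, altProd_succ, map_mul, ih, apply_ite f]

open TensorProduct in
lemma altProd_tmul {k : Type} [CommRing k] {A : Type} [Ring A] [Algebra k A]
    (a b c d : A) (n : ℕ) :
    altProd (a ⊗ₜ[k] b) (c ⊗ₜ[k] d) n = altProd a c n ⊗ₜ[k] altProd b d n := by
  induction n with
  | zero => simp [altProd, Algebra.TensorProduct.one_def]
  | succ n ih =>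
    rw [altProd_succ, altProd_succ, altProd_succ, ih]
    by_cases h : n % 2 = 0 <;> simp [h, Algebra.TensorProduct.tmul_mul_tmul]

set_option maxHeartbeats 1000000 in
set_option synthInstance.maxHeartbeats 400000 in
open TensorProduct in
/-- For any generalized Coxeter matrix `M`, the assignment `Δ(T_i) = T_i ⊗ T_i`
extends to a well-defined coassociative, cocommutative algebra homomorphism
`Δ : NC(M) → NC(M) ⊗ NC(M)`. -/
theorem NCM_grouplike_coproduct (k : Type) [CommRing k]
    (I : Type) [Fintype I] (M : I → I → ℕ)
    (hsymm : ∀ i j, M i j = M j i) (hdiag : ∀ i, 2 ≤ M i i)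
    (hoff : ∀ i j, i ≠ j → M i j = 0 ∨ 2 ≤ M i j) :
    ∃ Δ : NCM k M →ₐ[k] NCM k M ⊗[k] NCM k M,
      (∀ i : I, Δ (TgM k M i) = TgM k M i ⊗ₜ[k] TgM k M i) ∧
      (∀ x : NCM k M,
        TensorProduct.assoc k (NCM k M) (NCM k M) (NCM k M)
            (TensorProduct.map Δ.toLinearMap LinearMap.id (Δ x)) =
          TensorProduct.map LinearMap.id Δ.toLinearMap (Δ x)) ∧
      (∀ x : NCM k M, TensorProduct.comm k (NCM k M) (NCM k M) (Δ x) = Δ x) := by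
  classical
  set A := NCM k M with hA
  -- the candidate map from the free algebra
  let φ : FreeAlgebra k I →ₐ[k] A ⊗[k] A :=
    FreeAlgebra.lift k (fun i => TgM k M i ⊗ₜ[k] TgM k M i)
  have hπ : ∀ x : FreeAlgebra k I,
      RingQuot.mkAlgHom k (GCRel k M) x = RingQuot.mkAlgHom k (GCRel k M) x := fun _ => rfl
  have w : ∀ ⦃x y : FreeAlgebra k I⦄, GCRel k M x y → φ x = φ y := by
    intro x y h
    induction h with
    | braid i j h hm =>
      have h1 : φ (altProd (FreeAlgebra.ι k i) (FreeAlgebra.ι k j) (M i j)) =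
          altProd (TgM k M i) (TgM k M j) (M i j) ⊗ₜ[k]
            altProd (TgM k M i) (TgM k M j) (M i j) := by
        rw [altProd_map φ]
        simp only [AlgHom.coe_toMonoidHom, φ, FreeAlgebra.lift_ι_apply]
        rw [altProd_tmul]
      have h2 : φ (altProd (FreeAlgebra.ι k j) (FreeAlgebra.ι k i) (M i j)) =
          altProd (TgM k M j) (TgM k M i) (M i j) ⊗ₜ[k]
            altProd (TgM k M j) (TgM k M i) (M i j) := by
        rw [altProd_map φ]
        simp only [AlgHom.coe_toMonoidHom, φ, FreeAlgebra.lift_ι_apply]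
        rw [altProd_tmul]
      have key : altProd (TgM k M i) (TgM k M j) (M i j) =
          altProd (TgM k M j) (TgM k M i) (M i j) := by
        have := RingQuot.mkAlgHom_rel k (GCRel.braid (k := k) (M := M) i j h hm)
        rw [altProd_map (RingQuot.mkAlgHom k (GCRel k M)),
          altProd_map (RingQuot.mkAlgHom k (GCRel k M))] at this
        exact this
      rw [h1, h2, key]
    | order i =>
      have key : TgM k M i ^ M i i = 0 := by
        have := RingQuot.mkAlgHom_rel k (GCRel.order (k := k) (M := M) i)
        rw [map_pow, map_zero] at this
        exact this
      have : φ (FreeAlgebra.ι k i ^ M i i) =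
          (TgM k M i ⊗ₜ[k] TgM k M i) ^ M i i := by
        rw [map_pow]
        exact congrArg (· ^ M i i) (FreeAlgebra.lift_ι_apply _ _)
      rw [this, map_zero, Algebra.TensorProduct.tmul_pow, key, zero_tmul]
  let Δ : A →ₐ[k] A ⊗[k] A := RingQuot.liftAlgHom k ⟨φ, w⟩
  have hΔ : ∀ i : I, Δ (TgM k M i) = TgM k M i ⊗ₜ[k] TgM k M i := by
    intro i
    show Δ (RingQuot.mkAlgHom k (GCRel k M) (FreeAlgebra.ι k i)) = _
    rw [RingQuot.liftAlgHom_mkAlgHom_apply]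
    simp [φ, FreeAlgebra.lift_ι_apply]
  refine ⟨Δ, hΔ, ?_, ?_⟩
  · -- coassociativity
    -- first prove the algebra-hom version
    let F : A →ₐ[k] A ⊗[k] (A ⊗[k] A) :=
      ((Algebra.TensorProduct.assoc k k k A A A).toAlgHom.comp
        (Algebra.TensorProduct.map Δ (AlgHom.id k A))).comp Δ
    let G : A →ₐ[k] A ⊗[k] (A ⊗[k] A) :=
      (Algebra.TensorProduct.map (AlgHom.id k A) Δ).comp Δ
    have hFG : F = G := by
      apply RingQuot.ringQuot_ext'
      apply FreeAlgebra.hom_ext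
      funext i
      have : RingQuot.mkAlgHom k (GCRel k M) (FreeAlgebra.ι k i) = TgM k M i := rfl
      simp only [Function.comp_apply, AlgHom.coe_comp, AlgHom.toRingHom_eq_coe,
        RingHom.coe_coe, this, F, G]
      rw [hΔ]
      simp [Algebra.TensorProduct.map_tmul, hΔ, Algebra.TensorProduct.assoc_tmul]
    intro x
    have hx := congrArg (fun f => f x) hFG
    -- identify the algebraic maps with the linear ones
    have e1 : ∀ z : A ⊗[k] A,
        (Algebra.TensorProduct.map Δ (AlgHom.id k A)) z =
          TensorProduct.map Δ.toLinearMap LinearMap.id z := by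
      intro z
      induction z with
      | zero => simp
      | tmul a b => simp [Algebra.TensorProduct.map_tmul]
      | add a b ha hb => simp [map_add, ha, hb]
    have e2 : ∀ z : A ⊗[k] A,
        (Algebra.TensorProduct.map (AlgHom.id k A) Δ) z =
          TensorProduct.map LinearMap.id Δ.toLinearMap z := by
      intro z
      induction z with
      | zero => simp
      | tmul a b => simp [Algebra.TensorProduct.map_tmul]
      | add a b ha hb => simp [map_add, ha, hb]
    have e3 : ∀ z : (A ⊗[k] A) ⊗[k] A,
        (Algebra.TensorProduct.assoc k k k A A A) z =
          TensorProduct.assoc k A A A z := by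
      intro z
      induction z with
      | zero => rw [map_zero, map_zero]
      | tmul ab c =>
        induction ab with
        | zero => simp
        | tmul a b => simp [Algebra.TensorProduct.assoc_tmul, TensorProduct.assoc_tmul]
        | add a b ha hb => simp [add_tmul, map_add, ha, hb]
      | add a b ha hb => simp [map_add, ha, hb]
    simp only [F, G, AlgHom.coe_comp, Function.comp_apply, AlgEquiv.toAlgHom_eq_coe,
      AlgHom.coe_coe] at hx
    rw [e1, AlgEquiv.coe_toAlgHom, e3] at hx
    rw [hx, e2]
  · -- cocommutativity
    let F : A →ₐ[k] A ⊗[k] A :=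
      ((Algebra.TensorProduct.comm k A A).toAlgHom).comp Δ
    have hFG : F = Δ := by
      apply RingQuot.ringQuot_ext'
      apply FreeAlgebra.hom_ext
      funext i
      have : RingQuot.mkAlgHom k (GCRel k M) (FreeAlgebra.ι k i) = TgM k M i := rfl
      simp only [Function.comp_apply, AlgHom.coe_comp, AlgHom.toRingHom_eq_coe,
        RingHom.coe_coe, this, F]
      rw [hΔ]
      simp [Algebra.TensorProduct.comm_tmul, hΔ]
    intro x
    have hx := congrArg (fun f => f x) hFG
    have e : ∀ z : A ⊗[k] A,
        (Algebra.TensorProduct.comm k A A) z = TensorProduct.comm k A A z := by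
      intro z
      induction z with
      | zero => simp
      | tmul a b => simp [Algebra.TensorProduct.comm_tmul]
      | add a b ha hb => simp [map_add, ha, hb]
    simp only [F, AlgHom.coe_comp, Function.comp_apply, AlgEquiv.toAlgHom_eq_coe,
      AlgHom.coe_coe] at hx
    exact (e (Δ x)).symm.trans hx
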